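/- Assume the moment condition stated in the context. Then for every bounded, compactly supported Borel measurable function g : ℝ → ℂ whose set of discontinuity points has Lebesgue measure zero, lim_{j→∞} ∫_ℝ ξ_j(λ) g(λ) dλ = ∫_ℝ ξ(λ) g(λ) dλ. -/

import Mathlib

open MeasureTheory Filter Complex Topology

noncomputable def cc (l : ℝ) : ℂ := ((l : ℂ) + I)⁻¹

lemma add_I_ne (l : ℝ) : ((l : ℂ) + I) ≠ 0 := by
  intro h
  simpa using congrArg Complex.im h

lemma sub_I_ne (l : ℝ) : ((l : ℂ) - I) ≠ 0 := by
  intro h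
  simpa using congrArg Complex.im h

lemma cc_ne_zero (l : ℝ) : cc l ≠ 0 := inv_ne_zero (add_I_ne l)

lemma conj_cc (l : ℝ) : (starRingEnd ℂ) (cc l) = ((l : ℂ) - I)⁻¹ := by
  rw [cc, map_inv₀]
  congr 1
  simp [Complex.ext_iff]

lemma norm_cc_le_one (l : ℝ) : ‖cc l‖ ≤ 1 := by
  rw [cc, norm_inv]
  rw [inv_le_one_iff₀]
  right
  calc (1:ℝ) = |((l:ℂ) + I).im| := by simp
  _ ≤ ‖(l:ℂ) + I‖ := Complex.abs_im_le_norm _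
  _ = ‖(l:ℂ) + I‖ := rfl

lemma cc_mul_conj (l : ℝ) : cc l * (starRingEnd ℂ) (cc l) = (I/2) * (cc l - (starRingEnd ℂ) (cc l)) := by
  rw [conj_cc, cc]
  have h1 := add_I_ne l
  have h2 := sub_I_ne l
  field_simp
  ring_nf
  rw [Complex.I_sq]
  ring

def Vgen : Set (ℝ → ℂ) :=
  {q | ∃ n : ℕ, q = fun l => (cc l) ^ n} ∪ {q | ∃ n : ℕ, q = fun l => ((starRingEnd ℂ) (cc l)) ^ n}

noncomputable def V : Submodule ℂ (ℝ → ℂ) := Submodule.span ℂ Vgen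

lemma cc_pow_mem (n : ℕ) : (fun l => (cc l) ^ n) ∈ V :=
  Submodule.subset_span (Or.inl ⟨n, rfl⟩)

lemma conj_cc_pow_mem (n : ℕ) : (fun l => ((starRingEnd ℂ) (cc l)) ^ n) ∈ V :=
  Submodule.subset_span (Or.inr ⟨n, rfl⟩)

lemma mixed_mem : ∀ (k m n : ℕ), m + n ≤ k →
    (fun l => (cc l) ^ m * ((starRingEnd ℂ) (cc l)) ^ n) ∈ V := by
  intro k
  induction k with
  | zero =>
    intro m n hmn
    obtain ⟨rfl, rfl⟩ : m = 0 ∧ n = 0 := by omega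
    simpa using cc_pow_mem 0
  | succ k ih =>
    intro m n hmn
    match m, n with
    | 0, n => simpa using conj_cc_pow_mem n
    | m + 1, 0 => simpa using cc_pow_mem (m + 1)
    | m + 1, n + 1 =>
      have key : (fun l => (cc l) ^ (m+1) * ((starRingEnd ℂ) (cc l)) ^ (n+1))
          = (I/2) • (fun l => (cc l) ^ (m+1) * ((starRingEnd ℂ) (cc l)) ^ n)
            - (I/2) • (fun l => (cc l) ^ m * ((starRingEnd ℂ) (cc l)) ^ (n+1)) := by
        funext l
        simp only [Pi.sub_apply, Pi.smul_apply, smul_eq_mul]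
        have h := cc_mul_conj l
        rw [pow_succ, pow_succ]
        linear_combination ((cc l) ^ m * ((starRingEnd ℂ) (cc l)) ^ n) * h
      rw [key]
      exact V.sub_mem (V.smul_mem _ (ih (m+1) n (by omega)))
        (V.smul_mem _ (ih m (n+1) (by omega)))

lemma V_mul_mem : ∀ q ∈ V, ∀ r ∈ V, (fun l => q l * r l) ∈ V := by
  have gen : ∀ q ∈ Vgen, ∀ r ∈ Vgen, (fun l => q l * r l) ∈ V := by
    rintro q (⟨m, rfl⟩ | ⟨m, rfl⟩) r (⟨n, rfl⟩ | ⟨n, rfl⟩)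
    · simpa [pow_add] using cc_pow_mem (m + n)
    · exact mixed_mem (m+n) m n le_rfl
    · have : (fun l => ((starRingEnd ℂ) (cc l)) ^ m * (cc l) ^ n)
          = fun l => (cc l) ^ n * ((starRingEnd ℂ) (cc l)) ^ m := by
        funext l; ring
      rw [this]; exact mixed_mem (n+m) n m le_rfl
    · simpa [pow_add] using conj_cc_pow_mem (m + n)
  have step : ∀ q ∈ Vgen, ∀ r ∈ V, (fun l => q l * r l) ∈ V := by
    intro q hq r hr
    induction hr using Submodule.span_induction with
    | mem x hx => exact gen q hq x hx
    | zero =>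
      have : (fun l => q l * (0 : ℝ → ℂ) l) = (0 : ℝ → ℂ) := by funext l; simp
      rw [this]; exact V.zero_mem
    | add x y hx hy ihx ihy =>
      have : (fun l => q l * (x + y) l) = (fun l => q l * x l) + (fun l => q l * y l) := by
        funext l; simp [mul_add]
      rw [this]; exact V.add_mem ihx ihy
    | smul a x hx ihx =>
      have : (fun l => q l * (a • x) l) = a • (fun l => q l * x l) := by
        funext l; simp [Pi.smul_apply, smul_eq_mul]; ring
      rw [this]; exact V.smul_mem _ ihx
  intro q hq r hr
  induction hq using Submodule.span_induction with
  | mem x hx => exact step x hx r hr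
  | zero =>
    have : (fun l => (0 : ℝ → ℂ) l * r l) = (0 : ℝ → ℂ) := by funext l; simp
    rw [this]; exact V.zero_mem
  | add x y hx hy ihx ihy =>
    have : (fun l => (x + y) l * r l) = (fun l => x l * r l) + (fun l => y l * r l) := by
      funext l; simp [add_mul]
    rw [this]; exact V.add_mem ihx ihy
  | smul a x hx ihx =>
    have : (fun l => (a • x) l * r l) = a • (fun l => x l * r l) := by
      funext l; simp [Pi.smul_apply, smul_eq_mul]; ring
    rw [this]; exact V.smul_mem _ ihx

lemma V_star_mem : ∀ q ∈ V, (fun l => (starRingEnd ℂ) (q l)) ∈ V := by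
  intro q hq
  induction hq using Submodule.span_induction with
  | mem x hx =>
    rcases hx with ⟨n, rfl⟩ | ⟨n, rfl⟩
    · simpa [map_pow] using conj_cc_pow_mem n
    · have : (fun l => (starRingEnd ℂ) (((starRingEnd ℂ) (cc l)) ^ n)) = fun l => (cc l) ^ n := by
        funext l; simp [map_pow]
      rw [this]; exact cc_pow_mem n
  | zero =>
    have : (fun l => (starRingEnd ℂ) ((0 : ℝ → ℂ) l)) = (0 : ℝ → ℂ) := by funext l; simp
    rw [this]; exact V.zero_mem
  | add x y hx hy ihx ihy =>
    have : (fun l => (starRingEnd ℂ) ((x + y) l)) =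
        (fun l => (starRingEnd ℂ) (x l)) + (fun l => (starRingEnd ℂ) (y l)) := by
      funext l; simp
    rw [this]; exact V.add_mem ihx ihy
  | smul a x hx ihx =>
    have : (fun l => (starRingEnd ℂ) ((a • x) l)) =
        (starRingEnd ℂ) a • (fun l => (starRingEnd ℂ) (x l)) := by
      funext l; simp [Pi.smul_apply, smul_eq_mul]
    rw [this]; exact V.smul_mem _ ihx

lemma V_bounded : ∀ q ∈ V, ∃ B, ∀ l, ‖q l‖ ≤ B := by
  intro q hq
  induction hq using Submodule.span_induction with
  | mem x hx =>
    refine ⟨1, ?_⟩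
    rcases hx with ⟨n, rfl⟩ | ⟨n, rfl⟩ <;> intro l
    · rw [norm_pow]
      exact pow_le_one₀ (norm_nonneg _) (norm_cc_le_one l)
    · rw [norm_pow]
      refine pow_le_one₀ (norm_nonneg _) ?_
      rw [RCLike.norm_conj]
      exact norm_cc_le_one l
  | zero => exact ⟨0, by simp⟩
  | add x y hx hy ihx ihy =>
    obtain ⟨B1, h1⟩ := ihx; obtain ⟨B2, h2⟩ := ihy
    exact ⟨B1 + B2, fun l => (norm_add_le _ _).trans (add_le_add (h1 l) (h2 l))⟩
  | smul a x hx ihx =>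
    obtain ⟨B, hB⟩ := ihx
    refine ⟨‖a‖ * B, fun l => ?_⟩
    simp only [Pi.smul_apply, norm_smul]
    exact mul_le_mul_of_nonneg_left (hB l) (norm_nonneg _)

lemma V_measurable : ∀ q ∈ V, Measurable q := by
  have hc : Measurable cc := by
    apply Measurable.inv
    exact (Complex.measurable_ofReal.add_const I)
  intro q hq
  induction hq using Submodule.span_induction with
  | mem x hx =>
    rcases hx with ⟨n, rfl⟩ | ⟨n, rfl⟩
    · exact hc.pow_const n
    · exact (Complex.continuous_conj.measurable.comp hc).pow_const n
  | zero => exact measurable_const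
  | add x y hx hy ihx ihy => exact ihx.add ihy
  | smul a x hx ihx => exact ihx.const_smul a

structure GoodW (w : ℝ → ℝ) (wj : ℕ → ℝ → ℝ) : Prop where
  meas : Measurable w
  measj : ∀ j, Measurable (wj j)
  nn : ∀ l, 0 ≤ w l
  nnj : ∀ j l, 0 ≤ wj j l
  int : Integrable w
  intj : ∀ j, Integrable (wj j)
  momp : ∀ n : ℕ, Tendsto (fun j => ∫ l : ℝ, (wj j l : ℂ) * (cc l) ^ n) atTop
    (𝓝 (∫ l : ℝ, (w l : ℂ) * (cc l) ^ n))
  momm : ∀ n : ℕ, Tendsto (fun j => ∫ l : ℝ, (wj j l : ℂ) * ((starRingEnd ℂ) (cc l)) ^ n) atTop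
    (𝓝 (∫ l : ℝ, (w l : ℂ) * ((starRingEnd ℂ) (cc l)) ^ n))

lemma integrable_mul_bdd {w : ℝ → ℝ} (hw : Integrable w) {q : ℝ → ℂ}
    (hq : Measurable q) (hb : ∃ B, ∀ l, ‖q l‖ ≤ B) :
    Integrable (fun l => (w l : ℂ) * q l) := by
  have : (fun l => (w l : ℂ) * q l) = fun l => q l * (w l : ℂ) := by funext l; ring
  rw [this]
  exact Integrable.bdd_mul hw.ofReal hq.aestronglyMeasurable (ae_of_all _ hb.choose_spec)

lemma V_tendsto {w : ℝ → ℝ} {wj : ℕ → ℝ → ℝ} (hG : GoodW w wj) :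
    ∀ q ∈ V, Integrable (fun l => (w l : ℂ) * q l) ∧
      (∀ j, Integrable (fun l => (wj j l : ℂ) * q l)) ∧
      Tendsto (fun j => ∫ l : ℝ, (wj j l : ℂ) * q l) atTop (𝓝 (∫ l : ℝ, (w l : ℂ) * q l)) := by
  intro q hq
  induction hq using Submodule.span_induction with
  | mem x hx =>
    have hb : ∃ B, ∀ l, ‖x l‖ ≤ B := V_bounded x (Submodule.subset_span hx)
    have hm : Measurable x := V_measurable x (Submodule.subset_span hx)
    refine ⟨integrable_mul_bdd hG.int hm hb, fun j => integrable_mul_bdd (hG.intj j) hm hb, ?_⟩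
    rcases hx with ⟨n, rfl⟩ | ⟨n, rfl⟩
    · exact hG.momp n
    · exact hG.momm n
  | zero =>
    refine ⟨by simpa using (integrable_zero _ _ _ : Integrable (fun _ : ℝ => (0:ℂ))),
      fun j => by simpa using (integrable_zero _ _ _ : Integrable (fun _ : ℝ => (0:ℂ))), ?_⟩
    simpa using (tendsto_const_nhds : Tendsto (fun _ : ℕ => (0:ℂ)) atTop (𝓝 0))
  | add x y hx hy ihx ihy =>
    obtain ⟨ix, ijx, tx⟩ := ihx
    obtain ⟨iy, ijy, ty⟩ := ihy
    have e : ∀ (u : ℝ → ℝ), (fun l => (u l : ℂ) * (x + y) l)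
        = (fun l => (u l : ℂ) * x l) + fun l => (u l : ℂ) * y l := by
      intro u; funext l; simp [mul_add]
    refine ⟨by rw [e]; exact ix.add iy, fun j => by rw [e]; exact (ijx j).add (ijy j), ?_⟩
    have key : ∀ j, ∫ l : ℝ, (wj j l : ℂ) * (x + y) l
        = (∫ l : ℝ, (wj j l : ℂ) * x l) + ∫ l : ℝ, (wj j l : ℂ) * y l := by
      intro j
      rw [e]
      exact integral_add (ijx j) (ijy j)
    have keyw : ∫ l : ℝ, (w l : ℂ) * (x + y) l
        = (∫ l : ℝ, (w l : ℂ) * x l) + ∫ l : ℝ, (w l : ℂ) * y l := by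
      rw [e]; exact integral_add ix iy
    simp only [key, keyw]
    exact tx.add ty
  | smul a x hx ihx =>
    obtain ⟨ix, ijx, tx⟩ := ihx
    have e : ∀ (u : ℝ → ℝ), (fun l => (u l : ℂ) * (a • x) l)
        = fun l => a * ((u l : ℂ) * x l) := by
      intro u; funext l; simp [Pi.smul_apply, smul_eq_mul]; ring
    refine ⟨by rw [e]; exact ix.const_mul a, fun j => by rw [e]; exact (ijx j).const_mul a, ?_⟩
    have key : ∀ j, ∫ l : ℝ, (wj j l : ℂ) * (a • x) l = a * ∫ l : ℝ, (wj j l : ℂ) * x l := by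
      intro j; rw [e]; exact integral_const_mul a _
    have keyw : ∫ l : ℝ, (w l : ℂ) * (a • x) l = a * ∫ l : ℝ, (w l : ℂ) * x l := by
      rw [e]; exact integral_const_mul a _
    simp only [key, keyw]
    exact tx.const_mul a

lemma mass_tendsto {w : ℝ → ℝ} {wj : ℕ → ℝ → ℝ} (hG : GoodW w wj) :
    Tendsto (fun j => ∫ l : ℝ, wj j l) atTop (𝓝 (∫ l : ℝ, w l)) := by
  have h := hG.momp 0
  have e : ∀ (u : ℝ → ℝ), (∫ l : ℝ, (u l : ℂ) * (cc l) ^ 0) = ((∫ l : ℝ, u l : ℝ) : ℂ) := by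
    intro u
    simp only [pow_zero, mul_one]
    exact integral_ofReal
  simp only [e] at h
  have := (Complex.continuous_re.tendsto _).comp h
  simpa [Function.comp_def] using this

def KK : Set ℂ := closure (Set.range cc)

lemma range_cc_subset_ball : Set.range cc ⊆ Metric.closedBall 0 1 := by
  rintro w ⟨l, rfl⟩
  simpa [Metric.mem_closedBall] using norm_cc_le_one l

lemma isCompact_KK : IsCompact KK := by
  refine Metric.isCompact_of_isClosed_isBounded isClosed_closure ?_
  exact (Metric.isBounded_closedBall (x := (0:ℂ)) (r := 1)).subset
    ((closure_minimal range_cc_subset_ball Metric.isClosed_closedBall))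

instance : CompactSpace KK := isCompact_iff_compactSpace.mp isCompact_KK

instance : Nonempty KK := ⟨⟨cc 0, subset_closure (Set.mem_range_self 0)⟩⟩

def TT : Set ℂ := {w : ℂ | w = 0 ∨ (w ≠ 0 ∧ (w⁻¹).im = 1)}

lemma isClosed_TT : IsClosed TT := by
  rw [← isOpen_compl_iff]
  have e : TTᶜ = {w : ℂ | w ≠ 0} ∩ (fun w : ℂ => (w⁻¹).im) ⁻¹' {(1:ℝ)}ᶜ := by
    ext w
    simp only [TT, Set.mem_compl_iff, Set.mem_setOf_eq, Set.mem_inter_iff, Set.mem_preimage,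
      Set.mem_compl_iff, Set.mem_singleton_iff]
    tauto
  rw [e]
  refine ContinuousOn.isOpen_inter_preimage ?_ ?_ ?_
  · exact Complex.continuous_im.comp_continuousOn continuousOn_inv₀
  · exact isOpen_compl_singleton
  · exact isOpen_compl_singleton

lemma KK_subset_TT : KK ⊆ TT := by
  refine closure_minimal ?_ isClosed_TT
  rintro w ⟨l, rfl⟩
  right
  refine ⟨cc_ne_zero l, ?_⟩
  rw [cc, inv_inv]
  simp

lemma cc_re_inv {w : ℂ} (hw : w ≠ 0) (him : (w⁻¹).im = 1) : cc ((w⁻¹).re) = w := by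
  have : ((((w⁻¹).re : ℝ) : ℂ) + I) = w⁻¹ := by
    apply Complex.ext <;> simp [him]
  rw [cc, this, inv_inv]

lemma norm_inv_sq {w : ℂ} (hw : w ≠ 0) (him : (w⁻¹).im = 1) :
    ((w⁻¹).re) ^ 2 + 1 = ‖w‖⁻¹ ^ 2 := by
  have h1 : ‖w⁻¹‖ ^ 2 = (w⁻¹).re ^ 2 + (w⁻¹).im ^ 2 := by
    rw [Complex.sq_norm, Complex.normSq_apply]; ring
  rw [norm_inv] at h1
  rw [him] at h1
  linarith

noncomputable def FF (φ : ℝ → ℂ) : ℂ → ℂ := fun w => if w = 0 then 0 else φ ((w⁻¹).re)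

lemma FF_cc (φ : ℝ → ℂ) (l : ℝ) : FF φ (cc l) = φ l := by
  rw [FF]
  simp only [if_neg (cc_ne_zero l)]
  congr 1
  rw [cc, inv_inv]
  simp

lemma continuousOn_FF {φ : ℝ → ℂ} (hφ : Continuous φ) {R : ℝ} (hR : 0 ≤ R)
    (hsupp : ∀ x, R < |x| → φ x = 0) : ContinuousOn (FF φ) KK := by
  intro w hw
  rcases KK_subset_TT hw with rfl | ⟨hne, him⟩
  · -- at 0 : eventually zero within KK
    set δ : ℝ := (Real.sqrt (R ^ 2 + 1))⁻¹ with hδ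
    have hsq : 0 < Real.sqrt (R ^ 2 + 1) := Real.sqrt_pos.mpr (by positivity)
    have hδpos : 0 < δ := by positivity
    have hev : ∀ᶠ v in 𝓝[KK] (0:ℂ), FF φ v = 0 := by
      rw [eventually_nhdsWithin_iff]
      filter_upwards [Metric.ball_mem_nhds (0:ℂ) hδpos] with v hv hvK
      rcases KK_subset_TT hvK with rfl | ⟨hvne, hvim⟩
      · simp [FF]
      · rw [FF, if_neg hvne]
        apply hsupp
        have habs : 0 < ‖v‖ := by
          simpa [norm_pos_iff] using hvne
        have h1 : ‖v‖ < δ := by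
          simpa [Complex.dist_eq] using hv
        have h2 : Real.sqrt (R ^ 2 + 1) < ‖v‖⁻¹ := by
          rw [hδ] at h1
          have := (inv_lt_inv₀ (by positivity) habs).mpr h1
          simpa using this
        have h3 : R ^ 2 + 1 < (‖v‖⁻¹) ^ 2 := by
          have := pow_lt_pow_left₀ h2 hsq.le (by norm_num : (2:ℕ) ≠ 0)
          calc R ^ 2 + 1 = Real.sqrt (R ^ 2 + 1) ^ 2 := by
                rw [Real.sq_sqrt]; positivity
          _ < _ := by simpa using this
        have h4 := norm_inv_sq hvne hvim
        nlinarith [_root_.sq_abs ((v⁻¹).re), abs_nonneg ((v⁻¹).re)]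
    have h0 : FF φ (0:ℂ) = 0 := by simp [FF]
    refine (continuousWithinAt_const (b := (0:ℂ))).congr_of_eventuallyEq ?_ h0
    exact hev
  · -- at w ≠ 0
    have hinv : ContinuousAt (fun v : ℂ => φ ((v⁻¹).re)) w :=
      hφ.continuousAt.comp (Complex.continuous_re.continuousAt.comp (continuousAt_inv₀ hne))
    have heq : (fun v : ℂ => φ ((v⁻¹).re)) =ᶠ[𝓝 w] FF φ := by
      filter_upwards [isOpen_compl_singleton.mem_nhds hne] with v hv
      rw [FF, if_neg (show v ≠ 0 from hv)]
    exact (ContinuousAt.congr hinv heq).continuousWithinAt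

lemma cc_mem_KK (l : ℝ) : cc l ∈ KK := subset_closure (Set.mem_range_self l)

noncomputable def idK : C(KK, ℂ) := ⟨fun w => (w : ℂ), continuous_subtype_val⟩

lemma pullback_mem_V : ∀ p ∈ StarAlgebra.adjoin ℂ {idK},
    (fun l => p ⟨cc l, cc_mem_KK l⟩) ∈ V := by
  intro p hp
  induction hp using StarAlgebra.adjoin_induction with
  | mem x hx =>
    rw [Set.mem_singleton_iff] at hx
    subst hx
    have : (fun l => idK ⟨cc l, cc_mem_KK l⟩) = fun l => (cc l) ^ 1 := by
      funext l; simp [idK]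
    rw [this]; exact cc_pow_mem 1
  | algebraMap r =>
    have : (fun l => (algebraMap ℂ C(KK, ℂ) r) ⟨cc l, cc_mem_KK l⟩)
        = r • fun l => (cc l) ^ 0 := by
      funext l
      simp [Algebra.algebraMap_eq_smul_one, Pi.smul_apply, smul_eq_mul]
    rw [this]; exact V.smul_mem r (cc_pow_mem 0)
  | add x y hx hy ihx ihy =>
    have : (fun l => (x + y) ⟨cc l, cc_mem_KK l⟩)
        = (fun l => x ⟨cc l, cc_mem_KK l⟩) + fun l => y ⟨cc l, cc_mem_KK l⟩ := by
      funext l; simp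
    rw [this]; exact V.add_mem ihx ihy
  | mul x y hx hy ihx ihy =>
    have : (fun l => (x * y) ⟨cc l, cc_mem_KK l⟩)
        = fun l => (fun l' => x ⟨cc l', cc_mem_KK l'⟩) l * (fun l' => y ⟨cc l', cc_mem_KK l'⟩) l := by
      funext l; simp
    rw [this]; exact V_mul_mem _ ihx _ ihy
  | star x hx ihx =>
    have : (fun l => (star x) ⟨cc l, cc_mem_KK l⟩)
        = fun l => (starRingEnd ℂ) ((fun l' => x ⟨cc l', cc_mem_KK l'⟩) l) := by
      funext l; simp
    rw [this]; exact V_star_mem _ ihx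

lemma adjoin_separates : (StarAlgebra.adjoin ℂ {idK} : StarSubalgebra ℂ C(KK, ℂ)).SeparatesPoints := by
  intro x y hxy
  refine ⟨_, ⟨idK, ?_, rfl⟩, ?_⟩
  · exact StarAlgebra.subset_adjoin ℂ _ rfl
  · simpa [idK, Subtype.ext_iff] using hxy

lemma exists_radius {φ : ℝ → ℂ} (h : HasCompactSupport φ) :
    ∃ R, 0 ≤ R ∧ ∀ x, R < |x| → φ x = 0 := by
  obtain ⟨r, hr⟩ := h.isBounded.subset_closedBall (0 : ℝ)
  refine ⟨max r 0, le_max_right _ _, fun x hx => ?_⟩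
  apply image_eq_zero_of_notMem_tsupport
  intro hmem
  have h1 : |x| ≤ r := by simpa [Real.dist_eq] using hr hmem
  have h2 : r ≤ max r 0 := le_max_left _ _
  linarith

lemma sub_bound {B ε' : ℝ} (hε' : 0 ≤ ε') (u : ℝ → ℝ) (hu : Integrable u)
    (hun : ∀ l, 0 ≤ u l) (huB : (∫ l : ℝ, u l) ≤ B) (ψ χ : ℝ → ℂ)
    (h1 : Integrable (fun l => (u l : ℂ) * ψ l)) (h2 : Integrable (fun l => (u l : ℂ) * χ l))
    (hd : ∀ l, ‖ψ l - χ l‖ ≤ ε') :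
    ‖(∫ l : ℝ, (u l : ℂ) * ψ l) - ∫ l : ℝ, (u l : ℂ) * χ l‖ ≤ B * ε' := by
  rw [← integral_sub h1 h2]
  have e : ∀ l : ℝ, (u l : ℂ) * ψ l - (u l : ℂ) * χ l = (u l : ℂ) * (ψ l - χ l) := by
    intro l; ring
  simp only [e]
  calc ‖∫ l : ℝ, (u l : ℂ) * (ψ l - χ l)‖ ≤ ∫ l : ℝ, ‖(u l : ℂ) * (ψ l - χ l)‖ :=
        norm_integral_le_integral_norm _
  _ ≤ ∫ l : ℝ, u l * ε' := by
      apply integral_mono ((h1.sub h2).congr ?_).norm (hu.mul_const ε')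
      · intro l
        simp only []
        rw [norm_mul]
        have h3 : ‖((u l : ℝ) : ℂ)‖ = u l := by
          rw [Complex.norm_real, Real.norm_eq_abs, _root_.abs_of_nonneg (hun l)]
        rw [h3]
        exact mul_le_mul_of_nonneg_left (hd l) (hun l)
      · exact Eventually.of_forall fun l => by simpa using (e l)
  _ = (∫ l : ℝ, u l) * ε' := integral_mul_const ε' u
  _ ≤ B * ε' := mul_le_mul_of_nonneg_right huB hε'

lemma cont_tendsto {w : ℝ → ℝ} {wj : ℕ → ℝ → ℝ} (hG : GoodW w wj) {φ : ℝ → ℂ}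
    (hφ : Continuous φ) (hφs : HasCompactSupport φ) :
    Tendsto (fun j => ∫ l : ℝ, (wj j l : ℂ) * φ l) atTop (𝓝 (∫ l : ℝ, (w l : ℂ) * φ l)) := by
  obtain ⟨R, hR0, hRs⟩ := exists_radius hφs
  obtain ⟨Cφ, hCφ⟩ : ∃ C, ∀ x, ‖φ x‖ ≤ C := hφs.exists_bound_of_continuous hφ
  have hm := mass_tendsto hG
  obtain ⟨B0, hB0⟩ : BddAbove (Set.range fun j => ∫ l : ℝ, wj j l) := hm.bddAbove_range
  set B : ℝ := max B0 (max (∫ l : ℝ, w l) 0) with hBdef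
  have hBw : (∫ l : ℝ, w l) ≤ B := (le_max_left _ _).trans (le_max_right _ _)
  have hBj : ∀ j, (∫ l : ℝ, wj j l) ≤ B := fun j =>
    (hB0 (Set.mem_range_self j)).trans (le_max_left _ _)
  have hB0' : (0:ℝ) ≤ B := (le_max_right _ _).trans (le_max_right _ _)
  rw [Metric.tendsto_atTop]
  intro ε hε
  set ε' : ℝ := ε / (4 * (B + 1)) with hε'def
  have hε' : 0 < ε' := by positivity
  have hdense := ContinuousMap.starSubalgebra_topologicalClosure_eq_top_of_separatesPoints
    (StarAlgebra.adjoin ℂ {idK}) adjoin_separates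
  set Fc : C(KK, ℂ) :=
    ⟨KK.restrict (FF φ), continuousOn_iff_continuous_restrict.mp (continuousOn_FF hφ hR0 hRs)⟩
    with hFcdef
  have hFc : Fc ∈ closure ((StarAlgebra.adjoin ℂ {idK} : StarSubalgebra ℂ C(KK, ℂ)) :
      Set C(KK, ℂ)) := by
    have : Fc ∈ (StarAlgebra.adjoin ℂ {idK} : StarSubalgebra ℂ C(KK, ℂ)).topologicalClosure := by
      rw [hdense]; trivial
    exact this
  rw [Metric.mem_closure_iff] at hFc
  obtain ⟨p, hpA, hpd⟩ := hFc ε' hε'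
  set q : ℝ → ℂ := fun l => p ⟨cc l, cc_mem_KK l⟩ with hqdef
  have hqV := pullback_mem_V p hpA
  obtain ⟨hiq, hijq, htq⟩ := V_tendsto hG q hqV
  have happrox : ∀ l, ‖φ l - q l‖ ≤ ε' := by
    intro l
    have h1 : φ l = Fc ⟨cc l, cc_mem_KK l⟩ := (FF_cc φ l).symm
    rw [h1]
    calc ‖Fc ⟨cc l, cc_mem_KK l⟩ - q l‖ = dist (Fc ⟨cc l, cc_mem_KK l⟩) (p ⟨cc l, cc_mem_KK l⟩) :=
          (dist_eq_norm _ _).symm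
    _ ≤ dist Fc p := ContinuousMap.dist_apply_le_dist _
    _ ≤ ε' := hpd.le
  have hiφ : Integrable (fun l => (w l : ℂ) * φ l) :=
    integrable_mul_bdd hG.int hφ.measurable ⟨Cφ, hCφ⟩
  have hijφ : ∀ j, Integrable (fun l => (wj j l : ℂ) * φ l) := fun j =>
    integrable_mul_bdd (hG.intj j) hφ.measurable ⟨Cφ, hCφ⟩
  obtain ⟨N, hN⟩ := Metric.tendsto_atTop.mp htq ε' hε'
  refine ⟨N, fun j hj => ?_⟩
  have d1 : dist (∫ l : ℝ, (wj j l : ℂ) * φ l) (∫ l : ℝ, (wj j l : ℂ) * q l) ≤ B * ε' := by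
    rw [dist_eq_norm]
    exact sub_bound hε'.le _ (hG.intj j) (hG.nnj j) (hBj j) _ _ (hijφ j) (hijq j) happrox
  have d2 : dist (∫ l : ℝ, (wj j l : ℂ) * q l) (∫ l : ℝ, (w l : ℂ) * q l) < ε' := hN j hj
  have d3 : dist (∫ l : ℝ, (w l : ℂ) * q l) (∫ l : ℝ, (w l : ℂ) * φ l) ≤ B * ε' := by
    rw [dist_eq_norm, ← norm_neg, neg_sub]
    exact sub_bound hε'.le _ hG.int hG.nn hBw _ _ hiφ hiq happrox
  have htri := dist_triangle4 (∫ l : ℝ, (wj j l : ℂ) * φ l) (∫ l : ℝ, (wj j l : ℂ) * q l)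
    (∫ l : ℝ, (w l : ℂ) * q l) (∫ l : ℝ, (w l : ℂ) * φ l)
  have harith : B * ε' + ε' + B * ε' < ε := by
    have h4 : (2 * B + 1) * ε' < (4 * (B + 1)) * ε' := by
      apply mul_lt_mul_of_pos_right _ hε'
      linarith
    have h5 : (4 * (B + 1)) * ε' = ε := by
      rw [hε'def]; field_simp
    linarith
  linarith

lemma cont_tendsto_real {w : ℝ → ℝ} {wj : ℕ → ℝ → ℝ} (hG : GoodW w wj) {u : ℝ → ℝ}
    (hu : Continuous u) (hus : HasCompactSupport u) :
    Tendsto (fun j => ∫ l : ℝ, wj j l * u l) atTop (𝓝 (∫ l : ℝ, w l * u l)) := by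
  have hsupp2 : HasCompactSupport (fun l : ℝ => ((u l : ℝ) : ℂ)) :=
    HasCompactSupport.comp_left (g := Complex.ofReal) hus Complex.ofReal_zero
  have h := cont_tendsto hG (φ := fun l => ((u l : ℝ) : ℂ))
    (Complex.continuous_ofReal.comp hu) hsupp2
  have e : ∀ (v : ℝ → ℝ), (∫ l : ℝ, (v l : ℂ) * ((u l : ℝ) : ℂ)) = ((∫ l : ℝ, v l * u l : ℝ) : ℂ) := by
    intro v
    simp only [← Complex.ofReal_mul]
    exact integral_ofReal
  simp only [e] at h
  have := (Complex.continuous_re.tendsto _).comp h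
  simpa [Function.comp_def] using this

section Envelope

noncomputable def lowEnv (u : ℝ → ℝ) (n : ℕ) (x : ℝ) : ℝ :=
  ⨅ y : ℝ, (u y + ((n : ℝ) + 1) * |x - y|)

variable {u : ℝ → ℝ} {M : ℝ}

lemma lowEnv_bddBelow (hM : ∀ l, |u l| ≤ M) (n : ℕ) (x : ℝ) :
    BddBelow (Set.range fun y => u y + ((n : ℝ) + 1) * |x - y|) := by
  refine ⟨-M, ?_⟩
  rintro r ⟨y, rfl⟩
  have h1 : -M ≤ u y := neg_le_of_abs_le (hM y)
  have h2 : 0 ≤ ((n : ℝ) + 1) * |x - y| := by positivity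
  simp only []
  linarith

lemma lowEnv_le (hM : ∀ l, |u l| ≤ M) (n : ℕ) (x : ℝ) : lowEnv u n x ≤ u x := by
  have h := ciInf_le (lowEnv_bddBelow hM n x) x
  have h2 : u x + ((n : ℝ) + 1) * |x - x| = u x := by simp
  rw [h2] at h
  exact h

lemma lowEnv_ge (hM : ∀ l, |u l| ≤ M) (n : ℕ) (x : ℝ) : -M ≤ lowEnv u n x := by
  show -M ≤ ⨅ y : ℝ, (u y + ((n : ℝ) + 1) * |x - y|)
  refine le_ciInf fun y => ?_
  have h1 : -M ≤ u y := neg_le_of_abs_le (hM y)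
  have h2 : 0 ≤ ((n : ℝ) + 1) * |x - y| := by positivity
  linarith

lemma lowEnv_lipschitz (hM : ∀ l, |u l| ≤ M) (n : ℕ) (x x' : ℝ) :
    lowEnv u n x ≤ lowEnv u n x' + ((n : ℝ) + 1) * |x - x'| := by
  have key : ∀ y, lowEnv u n x ≤ (u y + ((n : ℝ) + 1) * |x' - y|) + ((n : ℝ) + 1) * |x - x'| := by
    intro y
    calc lowEnv u n x ≤ u y + ((n : ℝ) + 1) * |x - y| := ciInf_le (lowEnv_bddBelow hM n x) y
    _ ≤ (u y + ((n : ℝ) + 1) * |x' - y|) + ((n : ℝ) + 1) * |x - x'| := by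
        have h1 : |x - y| ≤ |x - x'| + |x' - y| := abs_sub_le x x' y
        have h2 : (0:ℝ) ≤ (n : ℝ) + 1 := by positivity
        nlinarith
  have h2 : lowEnv u n x - ((n : ℝ) + 1) * |x - x'| ≤
      ⨅ y : ℝ, (u y + ((n : ℝ) + 1) * |x' - y|) :=
    le_ciInf fun y => by linarith [key y]
  have h3 : (⨅ y : ℝ, (u y + ((n : ℝ) + 1) * |x' - y|)) = lowEnv u n x' := rfl
  rw [h3] at h2
  linarith

lemma lowEnv_continuous (hM : ∀ l, |u l| ≤ M) (n : ℕ) : Continuous (lowEnv u n) := by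
  have : LipschitzWith (Real.toNNReal ((n : ℝ) + 1)) (lowEnv u n) := by
    refine LipschitzWith.of_dist_le_mul fun x x' => ?_
    rw [Real.dist_eq, Real.dist_eq, abs_le]
    constructor
    · have := lowEnv_lipschitz hM n x' x
      have hc : Real.toNNReal ((n : ℝ) + 1) = ((n:ℝ)+1 : ℝ) := by
        rw [Real.coe_toNNReal]; positivity
      rw [hc]
      rw [abs_sub_comm] at this
      linarith
    · have := lowEnv_lipschitz hM n x x'
      have hc : (Real.toNNReal ((n : ℝ) + 1) : ℝ) = (n:ℝ)+1 := by
        rw [Real.coe_toNNReal]; positivity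
      rw [hc]
      linarith
  exact this.continuous

lemma lowEnv_support (hM : ∀ l, |u l| ≤ M) (hM0 : 0 ≤ M) {R : ℝ}
    (hsupp : ∀ y, R < |y| → u y = 0) (n : ℕ) (x : ℝ) (hx : R + 2 * M < |x|) :
    lowEnv u n x = 0 := by
  have hle : lowEnv u n x ≤ 0 := by
    have h1 := lowEnv_le hM n x
    have h2 : u x = 0 := hsupp x (by linarith)
    linarith
  have hge : 0 ≤ lowEnv u n x := by
    show (0:ℝ) ≤ ⨅ y : ℝ, (u y + ((n : ℝ) + 1) * |x - y|)
    refine le_ciInf fun y => ?_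
    by_cases hy : R < |y|
    · have : u y = 0 := hsupp y hy
      rw [this]
      positivity
    · push_neg at hy
      have h1 : -M ≤ u y := neg_le_of_abs_le (hM y)
      have h2 : 2 * M ≤ |x - y| := by
        have := abs_sub_abs_le_abs_sub x y
        linarith
      have h3 : (1:ℝ) ≤ (n:ℝ) + 1 := by
        have : (0:ℝ) ≤ (n:ℝ) := Nat.cast_nonneg n
        linarith
      nlinarith
  linarith

lemma lowEnv_tendsto (hM : ∀ l, |u l| ≤ M) {x : ℝ} (hx : ContinuousAt u x) :
    Tendsto (fun n => lowEnv u n x) atTop (𝓝 (u x)) := by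
  rw [Metric.tendsto_atTop]
  intro ε hε
  obtain ⟨δ, hδ, hδ'⟩ := Metric.continuousAt_iff.mp hx (ε/2) (by linarith)
  obtain ⟨N, hN⟩ := exists_nat_gt ((2 * M + |u x|) / δ)
  refine ⟨N, fun n hn => ?_⟩
  have hlow : u x - ε/2 ≤ lowEnv u n x := by
    show u x - ε/2 ≤ ⨅ y : ℝ, (u y + ((n : ℝ) + 1) * |x - y|)
    refine le_ciInf fun y => ?_
    by_cases hy : |y - x| < δ
    · have := hδ' (show dist y x < δ by rwa [Real.dist_eq])
      rw [Real.dist_eq] at this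
      have h2 : 0 ≤ ((n : ℝ) + 1) * |x - y| := by positivity
      have h3 : -(ε/2) < u y - u x := neg_lt_of_abs_lt this
      linarith
    · push_neg at hy
      have h1 : -M ≤ u y := neg_le_of_abs_le (hM y)
      have h2 : (2 * M + |u x|) / δ < (n:ℝ) + 1 := by
        have h3 : (N:ℝ) ≤ (n:ℝ) := Nat.cast_le.mpr hn
        linarith
      have h4 : 2 * M + |u x| < ((n:ℝ) + 1) * δ := by
        rw [div_lt_iff₀ hδ] at h2
        linarith
      have h5 : ((n:ℝ) + 1) * δ ≤ ((n:ℝ) + 1) * |x - y| := by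
        apply mul_le_mul_of_nonneg_left _ (by positivity)
        rwa [abs_sub_comm]
      have h6 : u x ≤ |u x| := le_abs_self _
      have h7 : 0 ≤ M := le_trans (abs_nonneg _) (hM x)
      nlinarith
  have hup : lowEnv u n x ≤ u x := lowEnv_le hM n x
  rw [Real.dist_eq, abs_lt]
  constructor <;> linarith

noncomputable def upEnv (u : ℝ → ℝ) (n : ℕ) (x : ℝ) : ℝ := -(lowEnv (fun y => -u y) n x)

lemma abs_neg_u (hM : ∀ l, |u l| ≤ M) : ∀ l, |-u l| ≤ M := fun l => by
  rw [abs_neg]; exact hM l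

lemma le_upEnv (hM : ∀ l, |u l| ≤ M) (n : ℕ) (x : ℝ) : u x ≤ upEnv u n x := by
  have := lowEnv_le (abs_neg_u hM) n x
  simp only [upEnv]
  linarith

lemma upEnv_le (hM : ∀ l, |u l| ≤ M) (n : ℕ) (x : ℝ) : upEnv u n x ≤ M := by
  have := lowEnv_ge (abs_neg_u hM) n x
  simp only [upEnv]
  linarith

lemma upEnv_continuous (hM : ∀ l, |u l| ≤ M) (n : ℕ) : Continuous (upEnv u n) :=
  (lowEnv_continuous (abs_neg_u hM) n).neg

lemma upEnv_support (hM : ∀ l, |u l| ≤ M) (hM0 : 0 ≤ M) {R : ℝ}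
    (hsupp : ∀ y, R < |y| → u y = 0) (n : ℕ) (x : ℝ) (hx : R + 2 * M < |x|) :
    upEnv u n x = 0 := by
  rw [upEnv, lowEnv_support (abs_neg_u hM) hM0 (fun y hy => by rw [hsupp y hy, neg_zero]) n x hx,
    neg_zero]

lemma upEnv_tendsto (hM : ∀ l, |u l| ≤ M) {x : ℝ} (hx : ContinuousAt u x) :
    Tendsto (fun n => upEnv u n x) atTop (𝓝 (u x)) := by
  have h := lowEnv_tendsto (abs_neg_u hM) (x := x) (continuous_neg.continuousAt.comp hx)
  have := h.neg
  simpa [upEnv] using this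

end Envelope

lemma exists_radius' {u : ℝ → ℝ} (h : HasCompactSupport u) :
    ∃ R, 0 ≤ R ∧ ∀ x, R < |x| → u x = 0 := by
  obtain ⟨r, hr⟩ := h.isBounded.subset_closedBall (0 : ℝ)
  refine ⟨max r 0, le_max_right _ _, fun x hx => ?_⟩
  apply image_eq_zero_of_notMem_tsupport
  intro hmem
  have h1 : |x| ≤ r := by simpa [Real.dist_eq] using hr hmem
  have h2 : r ≤ max r 0 := le_max_left _ _
  linarith

lemma hcs_of_radius {v : ℝ → ℝ} {r : ℝ} (h : ∀ x, r < |x| → v x = 0) : HasCompactSupport v := by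
  refine HasCompactSupport.intro (isCompact_Icc (a := -(r+1)) (b := r+1)) fun x hx => ?_
  apply h
  rcases not_and_or.mp (fun hc => hx ⟨hc.1, hc.2⟩) with h1 | h1 <;> push_neg at h1
  · have := neg_le_abs x; linarith
  · have := le_abs_self x; linarith

lemma main_real {w : ℝ → ℝ} {wj : ℕ → ℝ → ℝ} (hG : GoodW w wj) {u : ℝ → ℝ}
    (hmeas : Measurable u) {M : ℝ} (hM : ∀ l, |u l| ≤ M) (hsupp : HasCompactSupport u)
    (hcont : volume {x : ℝ | ¬ ContinuousAt u x} = 0) :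
    Tendsto (fun j => ∫ l : ℝ, wj j l * u l) atTop (𝓝 (∫ l : ℝ, w l * u l)) := by
  have hM0 : 0 ≤ M := le_trans (abs_nonneg _) (hM 0)
  obtain ⟨R, hR0, hRs⟩ := exists_radius' hsupp
  have hφc : ∀ n, Continuous (lowEnv u n) := lowEnv_continuous hM
  have hψc : ∀ n, Continuous (upEnv u n) := upEnv_continuous hM
  have hφ0 : ∀ n x, R + 2 * M < |x| → lowEnv u n x = 0 := lowEnv_support hM hM0 hRs
  have hψ0 : ∀ n x, R + 2 * M < |x| → upEnv u n x = 0 := upEnv_support hM hM0 hRs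
  have hφs : ∀ n, HasCompactSupport (lowEnv u n) := fun n => hcs_of_radius (hφ0 n)
  have hψs : ∀ n, HasCompactSupport (upEnv u n) := fun n => hcs_of_radius (hψ0 n)
  have hφle : ∀ n x, lowEnv u n x ≤ u x := lowEnv_le hM
  have hψge : ∀ n x, u x ≤ upEnv u n x := le_upEnv hM
  have hφge : ∀ n x, -M ≤ lowEnv u n x := lowEnv_ge hM
  have hψle : ∀ n x, upEnv u n x ≤ M := upEnv_le hM
  have haecont : ∀ᵐ x : ℝ, ContinuousAt u x := by
    rw [ae_iff]; exact hcont
  -- dominated convergence in n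
  have hDCT : Tendsto (fun n => ∫ l : ℝ, w l * (upEnv u n l - lowEnv u n l)) atTop
      (𝓝 (∫ l : ℝ, w l * (u l - u l))) := by
    apply tendsto_integral_of_dominated_convergence (bound := fun l => w l * (2 * M))
    · intro n
      exact (hG.meas.mul ((hψc n).measurable.sub (hφc n).measurable)).aestronglyMeasurable
    · exact hG.int.mul_const _
    · intro n
      refine Eventually.of_forall fun l => ?_
      rw [Real.norm_eq_abs, abs_mul, _root_.abs_of_nonneg (hG.nn l)]
      apply mul_le_mul_of_nonneg_left _ (hG.nn l)
      rw [_root_.abs_of_nonneg (by linarith [hφle n l, hψge n l])]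
      linarith [hψle n l, hφge n l]
    · filter_upwards [haecont] with l hl
      exact ((upEnv_tendsto hM hl).sub (lowEnv_tendsto hM hl)).const_mul (w l)
  have hDCT0 : Tendsto (fun n => ∫ l : ℝ, w l * (upEnv u n l - lowEnv u n l)) atTop (𝓝 0) := by
    simpa using hDCT
  rw [Metric.tendsto_atTop]
  intro ε hε
  obtain ⟨n, hn⟩ : ∃ n, (∫ l : ℝ, w l * (upEnv u n l - lowEnv u n l)) < ε / 8 := by
    obtain ⟨N, hN⟩ := Metric.tendsto_atTop.mp hDCT0 (ε / 8) (by linarith)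
    refine ⟨N, ?_⟩
    have := hN N le_rfl
    rw [Real.dist_eq, sub_zero] at this
    exact lt_of_le_of_lt (le_abs_self _) this
  -- integrability
  have hIu : ∀ (v : ℝ → ℝ), Integrable v → Integrable (fun l => v l * u l) := by
    intro v hv
    have : (fun l => v l * u l) = fun l => u l * v l := by funext l; ring
    rw [this]
    exact hv.bdd_mul hmeas.aestronglyMeasurable (c := M) (ae_of_all _ fun x => by rw [Real.norm_eq_abs]; exact hM x)
  have hIφ : ∀ (v : ℝ → ℝ), Integrable v → ∀ n, Integrable (fun l => v l * lowEnv u n l) := by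
    intro v hv n
    have : (fun l => v l * lowEnv u n l) = fun l => lowEnv u n l * v l := by funext l; ring
    rw [this]
    refine hv.bdd_mul (hφc n).measurable.aestronglyMeasurable (c := M) (ae_of_all _ fun x => ?_)
    rw [Real.norm_eq_abs, abs_le]
    exact ⟨hφge n x, le_trans (hφle n x) (le_trans (le_abs_self _) (hM x))⟩
  have hIψ : ∀ (v : ℝ → ℝ), Integrable v → ∀ n, Integrable (fun l => v l * upEnv u n l) := by
    intro v hv n
    have : (fun l => v l * upEnv u n l) = fun l => upEnv u n l * v l := by funext l; ring
    rw [this]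
    refine hv.bdd_mul (hψc n).measurable.aestronglyMeasurable (c := M) (ae_of_all _ fun x => ?_)
    rw [Real.norm_eq_abs, abs_le]
    exact ⟨le_trans (neg_le_of_abs_le (hM x)) (hψge n x), hψle n x⟩
  -- convergence in j of the continuous approximants
  have hjφ := cont_tendsto_real hG (hφc n) (hφs n)
  have hδc : Continuous (fun l => upEnv u n l - lowEnv u n l) := (hψc n).sub (hφc n)
  have hδs : HasCompactSupport (fun l => upEnv u n l - lowEnv u n l) :=
    hcs_of_radius (r := R + 2 * M) fun x hx => by rw [hψ0 n x hx, hφ0 n x hx, sub_zero]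
  have hjδ := cont_tendsto_real hG hδc hδs
  have E1 : ∀ᶠ j in atTop, |(∫ l : ℝ, wj j l * lowEnv u n l) - ∫ l : ℝ, w l * lowEnv u n l| < ε/8 := by
    have := Metric.tendsto_atTop.mp hjφ (ε/8) (by linarith)
    obtain ⟨N, hN⟩ := this
    exact eventually_atTop.mpr ⟨N, fun j hj => by have := hN j hj; rwa [Real.dist_eq] at this⟩
  have E2 : ∀ᶠ j in atTop, (∫ l : ℝ, wj j l * (upEnv u n l - lowEnv u n l)) < ε/4 := by
    have := Metric.tendsto_atTop.mp hjδ (ε/8) (by linarith)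
    obtain ⟨N, hN⟩ := this
    refine eventually_atTop.mpr ⟨N, fun j hj => ?_⟩
    have h1 := hN j hj
    rw [Real.dist_eq] at h1
    have h2 := abs_lt.mp h1
    linarith [h2.2]
  obtain ⟨N, hN⟩ := eventually_atTop.mp (E1.and E2)
  refine ⟨N, fun j hj => ?_⟩
  obtain ⟨e1, e2⟩ := hN j hj
  -- pointwise inequalities
  have m1 : (∫ l : ℝ, wj j l * lowEnv u n l) ≤ ∫ l : ℝ, wj j l * u l :=
    integral_mono (hIφ _ (hG.intj j) n) (hIu _ (hG.intj j))
      (fun l => mul_le_mul_of_nonneg_left (hφle n l) (hG.nnj j l))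
  have m2 : (∫ l : ℝ, wj j l * u l) ≤ ∫ l : ℝ, wj j l * upEnv u n l :=
    integral_mono (hIu _ (hG.intj j)) (hIψ _ (hG.intj j) n)
      (fun l => mul_le_mul_of_nonneg_left (hψge n l) (hG.nnj j l))
  have m3 : (∫ l : ℝ, w l * lowEnv u n l) ≤ ∫ l : ℝ, w l * u l :=
    integral_mono (hIφ _ hG.int n) (hIu _ hG.int)
      (fun l => mul_le_mul_of_nonneg_left (hφle n l) (hG.nn l))
  have m4 : (∫ l : ℝ, w l * u l) ≤ ∫ l : ℝ, w l * upEnv u n l :=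
    integral_mono (hIu _ hG.int) (hIψ _ hG.int n)
      (fun l => mul_le_mul_of_nonneg_left (hψge n l) (hG.nn l))
  -- rewrite difference integrals
  have s1 : (∫ l : ℝ, wj j l * (upEnv u n l - lowEnv u n l))
      = (∫ l : ℝ, wj j l * upEnv u n l) - ∫ l : ℝ, wj j l * lowEnv u n l := by
    rw [← integral_sub (hIψ _ (hG.intj j) n) (hIφ _ (hG.intj j) n)]
    congr 1; funext l; ring
  have s2 : (∫ l : ℝ, w l * (upEnv u n l - lowEnv u n l))
      = (∫ l : ℝ, w l * upEnv u n l) - ∫ l : ℝ, w l * lowEnv u n l := by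
    rw [← integral_sub (hIψ _ hG.int n) (hIφ _ hG.int n)]
    congr 1; funext l; ring
  rw [s1] at e2
  rw [s2] at hn
  have e1' := abs_lt.mp e1
  rw [Real.dist_eq, abs_lt]
  constructor <;> linarith [e1'.1, e1'.2]

lemma main_complex {w : ℝ → ℝ} {wj : ℕ → ℝ → ℝ} (hG : GoodW w wj) {f : ℝ → ℂ}
    (hmeas : Measurable f) {M : ℝ} (hM : ∀ l, ‖f l‖ ≤ M) (hsupp : HasCompactSupport f)
    (hcont : volume {x : ℝ | ¬ ContinuousAt f x} = 0) :
    Tendsto (fun j => ∫ l : ℝ, (wj j l : ℂ) * f l) atTop (𝓝 (∫ l : ℝ, (w l : ℂ) * f l)) := by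
  set u1 : ℝ → ℝ := fun l => (f l).re with hu1
  set u2 : ℝ → ℝ := fun l => (f l).im with hu2
  have hm1 : Measurable u1 := Complex.measurable_re.comp hmeas
  have hm2 : Measurable u2 := Complex.measurable_im.comp hmeas
  have hM1 : ∀ l, |u1 l| ≤ M := fun l => le_trans (Complex.abs_re_le_norm (f l)) (hM l)
  have hM2 : ∀ l, |u2 l| ≤ M := fun l => le_trans (Complex.abs_im_le_norm (f l)) (hM l)
  have hs1 : HasCompactSupport u1 :=
    HasCompactSupport.comp_left (g := Complex.re) hsupp Complex.zero_re
  have hs2 : HasCompactSupport u2 :=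
    HasCompactSupport.comp_left (g := Complex.im) hsupp Complex.zero_im
  have hc1 : volume {x : ℝ | ¬ ContinuousAt u1 x} = 0 := by
    refine measure_mono_null (fun x hx => ?_) hcont
    simp only [Set.mem_setOf_eq] at hx ⊢
    intro hfx
    exact hx (Complex.continuous_re.continuousAt.comp hfx)
  have hc2 : volume {x : ℝ | ¬ ContinuousAt u2 x} = 0 := by
    refine measure_mono_null (fun x hx => ?_) hcont
    simp only [Set.mem_setOf_eq] at hx ⊢
    intro hfx
    exact hx (Complex.continuous_im.continuousAt.comp hfx)
  have t1 := main_real hG hm1 hM1 hs1 hc1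
  have t2 := main_real hG hm2 hM2 hs2 hc2
  have decomp : ∀ (v : ℝ → ℝ), Integrable v →
      (∫ l : ℝ, (v l : ℂ) * f l)
        = ((∫ l : ℝ, v l * u1 l : ℝ) : ℂ) + ((∫ l : ℝ, v l * u2 l : ℝ) : ℂ) * I := by
    intro v hv
    have e : (fun l : ℝ => (v l : ℂ) * f l)
        = fun l : ℝ => ((v l * u1 l : ℝ) : ℂ) + ((v l * u2 l : ℝ) : ℂ) * I := by
      funext l
      apply Complex.ext <;> simp [hu1, hu2]
    have I1r : Integrable (fun l : ℝ => v l * u1 l) := by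
      have : (fun l : ℝ => v l * u1 l) = fun l => u1 l * v l := by funext l; ring
      rw [this]
      exact hv.bdd_mul hm1.aestronglyMeasurable (c := M) (ae_of_all _ fun x => by
        rw [Real.norm_eq_abs]; exact hM1 x)
    have I2r : Integrable (fun l : ℝ => v l * u2 l) := by
      have : (fun l : ℝ => v l * u2 l) = fun l => u2 l * v l := by funext l; ring
      rw [this]
      exact hv.bdd_mul hm2.aestronglyMeasurable (c := M) (ae_of_all _ fun x => by
        rw [Real.norm_eq_abs]; exact hM2 x)
    rw [e]
    have I1c : Integrable (fun l : ℝ => ((v l * u1 l : ℝ) : ℂ)) := I1r.ofReal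
    have I2c : Integrable (fun l : ℝ => ((v l * u2 l : ℝ) : ℂ) * I) := I2r.ofReal.mul_const I
    have h1 : (∫ l : ℝ, (((v l * u1 l : ℝ) : ℂ) + ((v l * u2 l : ℝ) : ℂ) * I))
        = (∫ l : ℝ, ((v l * u1 l : ℝ) : ℂ)) + ∫ l : ℝ, ((v l * u2 l : ℝ) : ℂ) * I :=
      integral_add I1c I2c
    have h2 : (∫ l : ℝ, ((v l * u1 l : ℝ) : ℂ)) = ((∫ l : ℝ, v l * u1 l : ℝ) : ℂ) :=
      integral_ofReal
    have h3 : (∫ l : ℝ, ((v l * u2 l : ℝ) : ℂ) * I) = (∫ l : ℝ, ((v l * u2 l : ℝ) : ℂ)) * I :=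
      integral_mul_const I _
    have h4 : (∫ l : ℝ, ((v l * u2 l : ℝ) : ℂ)) = ((∫ l : ℝ, v l * u2 l : ℝ) : ℂ) :=
      integral_ofReal
    rw [h1, h2, h3, h4]
  have ej : ∀ j, (∫ l : ℝ, (wj j l : ℂ) * f l)
      = ((∫ l : ℝ, wj j l * u1 l : ℝ) : ℂ) + ((∫ l : ℝ, wj j l * u2 l : ℝ) : ℂ) * I :=
    fun j => decomp _ (hG.intj j)
  have ew := decomp _ hG.int
  simp only [ej, ew]
  exact (((Complex.continuous_ofReal.tendsto _).comp t1).add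
    (((Complex.continuous_ofReal.tendsto _).comp t2).mul_const I))

/-- The moment condition supplied by Lemma 3.3 of the paper for the positive and negative
parts `ξ_{j,±}`, `ξ_±` of the spectral shift functions: all are nonnegative measurable
functions whose `(λ²+1)⁻¹`-weighted integrals are finite, and all weighted moments against
powers `(λ±i)⁻ⁿ` converge as `j → ∞`. -/
def MomentCondition (ξp ξm : ℝ → ℝ) (ξjp ξjm : ℕ → ℝ → ℝ) : Prop :=
  Measurable ξp ∧ Measurable ξm ∧ (∀ j, Measurable (ξjp j)) ∧ (∀ j, Measurable (ξjm j)) ∧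
  (∀ l, 0 ≤ ξp l) ∧ (∀ l, 0 ≤ ξm l) ∧
  (∀ j l, 0 ≤ ξjp j l) ∧ (∀ j l, 0 ≤ ξjm j l) ∧
  Integrable (fun l : ℝ => ξp l / (l ^ 2 + 1)) ∧
  Integrable (fun l : ℝ => ξm l / (l ^ 2 + 1)) ∧
  (∀ j, Integrable (fun l : ℝ => ξjp j l / (l ^ 2 + 1))) ∧
  (∀ j, Integrable (fun l : ℝ => ξjm j l / (l ^ 2 + 1))) ∧
  (∀ n : ℕ,
    Tendsto (fun j => ∫ l : ℝ, (ξjp j l : ℂ) * ((l : ℂ) ^ 2 + 1)⁻¹ * (((l : ℂ) + I)⁻¹) ^ n)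
      atTop (𝓝 (∫ l : ℝ, (ξp l : ℂ) * ((l : ℂ) ^ 2 + 1)⁻¹ * (((l : ℂ) + I)⁻¹) ^ n)) ∧
    Tendsto (fun j => ∫ l : ℝ, (ξjp j l : ℂ) * ((l : ℂ) ^ 2 + 1)⁻¹ * (((l : ℂ) - I)⁻¹) ^ n)
      atTop (𝓝 (∫ l : ℝ, (ξp l : ℂ) * ((l : ℂ) ^ 2 + 1)⁻¹ * (((l : ℂ) - I)⁻¹) ^ n)) ∧
    Tendsto (fun j => ∫ l : ℝ, (ξjm j l : ℂ) * ((l : ℂ) ^ 2 + 1)⁻¹ * (((l : ℂ) + I)⁻¹) ^ n)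
      atTop (𝓝 (∫ l : ℝ, (ξm l : ℂ) * ((l : ℂ) ^ 2 + 1)⁻¹ * (((l : ℂ) + I)⁻¹) ^ n)) ∧
    Tendsto (fun j => ∫ l : ℝ, (ξjm j l : ℂ) * ((l : ℂ) ^ 2 + 1)⁻¹ * (((l : ℂ) - I)⁻¹) ^ n)
      atTop (𝓝 (∫ l : ℝ, (ξm l : ℂ) * ((l : ℂ) ^ 2 + 1)⁻¹ * (((l : ℂ) - I)⁻¹) ^ n)))

/-- Corollary 3.15: unweighted convergence against every bounded, compactly supported
Borel function that is continuous Lebesgue-almost everywhere. -/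
theorem xi_convergence_compactly_supported_ae_continuous
    (ξp ξm : ℝ → ℝ) (ξjp ξjm : ℕ → ℝ → ℝ)
    (h : MomentCondition ξp ξm ξjp ξjm)
    (g : ℝ → ℂ) (hgmeas : Measurable g) (C : ℝ) (hgb : ∀ l : ℝ, ‖g l‖ ≤ C)
    (hgsupp : HasCompactSupport g)
    (hgcont : volume {x : ℝ | ¬ ContinuousAt g x} = 0) :
    Tendsto
      (fun j => ∫ l : ℝ, ((ξjp j l - ξjm j l : ℝ) : ℂ) * g l)
      atTop
      (𝓝 (∫ l : ℝ, ((ξp l - ξm l : ℝ) : ℂ) * g l)) := by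
  obtain ⟨hmp, hmm, hmjp, hmjm, hnp, hnm, hnjp, hnjm, hip, him, hijp, hijm, hmom⟩ := h
  have hden : ∀ l : ℝ, (0:ℝ) < l ^ 2 + 1 := fun l => by positivity
  have hdenm : Measurable fun l : ℝ => l ^ 2 + 1 := by
    exact (measurable_id.pow_const 2).add_const 1
  have hccpow : ∀ (ξ : ℝ → ℝ) (n : ℕ),
      (∫ l : ℝ, ((ξ l / (l ^ 2 + 1) : ℝ) : ℂ) * (cc l) ^ n)
        = ∫ l : ℝ, (ξ l : ℂ) * ((l : ℂ) ^ 2 + 1)⁻¹ * (((l : ℂ) + I)⁻¹) ^ n := by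
    intro ξ n
    congr 1
    funext l
    rw [cc]
    push_cast
    ring
  have hccpow' : ∀ (ξ : ℝ → ℝ) (n : ℕ),
      (∫ l : ℝ, ((ξ l / (l ^ 2 + 1) : ℝ) : ℂ) * ((starRingEnd ℂ) (cc l)) ^ n)
        = ∫ l : ℝ, (ξ l : ℂ) * ((l : ℂ) ^ 2 + 1)⁻¹ * (((l : ℂ) - I)⁻¹) ^ n := by
    intro ξ n
    congr 1
    funext l
    rw [conj_cc]
    push_cast
    ring
  have hGp : GoodW (fun l => ξp l / (l ^ 2 + 1)) (fun j l => ξjp j l / (l ^ 2 + 1)) :=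
    { meas := hmp.div hdenm
      measj := fun j => (hmjp j).div hdenm
      nn := fun l => div_nonneg (hnp l) (hden l).le
      nnj := fun j l => div_nonneg (hnjp j l) (hden l).le
      int := hip
      intj := hijp
      momp := fun n => by
        simp only [hccpow]
        exact (hmom n).1
      momm := fun n => by
        simp only [hccpow']
        exact (hmom n).2.1 }
  have hGm : GoodW (fun l => ξm l / (l ^ 2 + 1)) (fun j l => ξjm j l / (l ^ 2 + 1)) :=
    { meas := hmm.div hdenm
      measj := fun j => (hmjm j).div hdenm
      nn := fun l => div_nonneg (hnm l) (hden l).le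
      nnj := fun j l => div_nonneg (hnjm j l) (hden l).le
      int := him
      intj := hijm
      momp := fun n => by
        simp only [hccpow]
        exact (hmom n).2.2.1
      momm := fun n => by
        simp only [hccpow']
        exact (hmom n).2.2.2 }
  -- the compactly supported test function against the weighted densities
  set f : ℝ → ℂ := fun l => ((l : ℂ) ^ 2 + 1) * g l with hf
  obtain ⟨R, hR0, hRs⟩ := exists_radius hgsupp
  have hC0 : 0 ≤ C := le_trans (norm_nonneg _) (hgb 0)
  have hfmeas : Measurable f := ((Complex.measurable_ofReal.pow_const 2).add_const 1).mul hgmeas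
  have hnorm_den : ∀ l : ℝ, ‖((l : ℂ) ^ 2 + 1)‖ = l ^ 2 + 1 := by
    intro l
    have : ((l : ℂ) ^ 2 + 1) = ((l ^ 2 + 1 : ℝ) : ℂ) := by push_cast; ring
    rw [this, Complex.norm_real, Real.norm_eq_abs, _root_.abs_of_pos (hden l)]
  have hfb : ∀ l, ‖f l‖ ≤ (R ^ 2 + 1) * C := by
    intro l
    by_cases hl : R < |l|
    · simp [hf, hRs l hl]
      positivity
    · push_neg at hl
      rw [hf]
      simp only [norm_mul]
      rw [hnorm_den]
      have h1 : l ^ 2 + 1 ≤ R ^ 2 + 1 := by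
        have h2 := _root_.sq_abs l
        nlinarith [abs_nonneg l]
      exact mul_le_mul h1 (hgb l) (norm_nonneg _) (by positivity)
  have hfsupp : HasCompactSupport f := by
    refine hgsupp.mono ?_
    intro l hl
    simp only [Function.mem_support, hf] at hl ⊢
    intro hg0
    exact hl (by rw [hg0, mul_zero])
  have hfcont : volume {x : ℝ | ¬ ContinuousAt f x} = 0 := by
    refine measure_mono_null (fun x hx => ?_) hgcont
    simp only [Set.mem_setOf_eq] at hx ⊢
    intro hgx
    exact hx ((((Complex.continuous_ofReal.pow 2).add continuous_const).continuousAt).mul hgx)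
  have tp := main_complex hGp hfmeas hfb hfsupp hfcont
  have tm := main_complex hGm hfmeas hfb hfsupp hfcont
  -- identify the integrands
  have hrw : ∀ (ξ1 ξ2 : ℝ → ℝ), Measurable ξ1 → Measurable ξ2 →
      Integrable (fun l : ℝ => ξ1 l / (l ^ 2 + 1)) → Integrable (fun l : ℝ => ξ2 l / (l ^ 2 + 1)) →
      (∫ l : ℝ, ((ξ1 l - ξ2 l : ℝ) : ℂ) * g l)
        = (∫ l : ℝ, ((ξ1 l / (l ^ 2 + 1) : ℝ) : ℂ) * f l)
          - ∫ l : ℝ, ((ξ2 l / (l ^ 2 + 1) : ℝ) : ℂ) * f l := by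
    intro ξ1 ξ2 hξ1 hξ2 hi1 hi2
    have e : ∀ (ξ : ℝ → ℝ) (l : ℝ), ((ξ l / (l ^ 2 + 1) : ℝ) : ℂ) * f l = (ξ l : ℂ) * g l := by
      intro ξ l
      rw [hf]
      have hne : ((l : ℂ) ^ 2 + 1) ≠ 0 := by
        intro hcon
        have := hnorm_den l
        rw [hcon] at this
        simp only [norm_zero] at this
        linarith [hden l]
      push_cast
      field_simp
    have i1 : Integrable (fun l : ℝ => ((ξ1 l / (l ^ 2 + 1) : ℝ) : ℂ) * f l) :=
      integrable_mul_bdd hi1 hfmeas ⟨(R ^ 2 + 1) * C, hfb⟩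
    have i2 : Integrable (fun l : ℝ => ((ξ2 l / (l ^ 2 + 1) : ℝ) : ℂ) * f l) :=
      integrable_mul_bdd hi2 hfmeas ⟨(R ^ 2 + 1) * C, hfb⟩
    rw [← integral_sub i1 i2]
    congr 1
    funext l
    rw [e ξ1 l, e ξ2 l]
    push_cast
    ring
  have hrwj : ∀ j, (∫ l : ℝ, ((ξjp j l - ξjm j l : ℝ) : ℂ) * g l)
      = (∫ l : ℝ, ((ξjp j l / (l ^ 2 + 1) : ℝ) : ℂ) * f l)
        - ∫ l : ℝ, ((ξjm j l / (l ^ 2 + 1) : ℝ) : ℂ) * f l :=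
    fun j => hrw _ _ (hmjp j) (hmjm j) (hijp j) (hijm j)
  have hrw0 := hrw _ _ hmp hmm hip him
  simp only [hrwj, hrw0]
  exact tp.sub tm
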